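/- Let μ be a probability measure on T × T (T a compact metric space) whose two marginals coincide (discrete holonomy). Then for every point (x₀, x₁) ∈ support(μ) there exists a bi-infinite sequence (x_k)_{k ∈ ℤ} with the given x₀, x₁ and (x_k, x_{k+1}) ∈ support(μ) for all k ∈ ℤ. -/
import Mathlib

open MeasureTheory

/-- A point `z` belongs to the support of `μ` iff every open neighborhood of `z`
has positive measure. -/
def inSupport {X : Type*} [TopologicalSpace X] [MeasurableSpace X]
    (μ : Measure X) (z : X) : Prop :=
  ∀ U : Set X, IsOpen U → z ∈ U → 0 < μ U

lemma step_fwd {T : Type*} [MetricSpace T] [CompactSpace T]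
    [MeasurableSpace T] [BorelSpace T]
    (μ : Measure (T × T))
    (hholo : μ.map Prod.fst = μ.map Prod.snd)
    {a b : T} (h : inSupport μ (a, b)) : ∃ c, inSupport μ (b, c) := by
  by_contra hc
  push_neg at hc
  have hc' : ∀ c : T, ∃ U : Set (T × T), IsOpen U ∧ (b, c) ∈ U ∧ μ U = 0 := by
    intro c
    have := hc c
    simp only [inSupport, not_forall] at this
    obtain ⟨U, hUo, hUm, hU⟩ := this
    exact ⟨U, hUo, hUm, le_antisymm (not_lt.mp hU) bot_le⟩
  choose U hUo hUm hU0 using hc'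
  have hcov : (Set.univ : Set T) ⊆ ⋃ c : T, Prod.mk b ⁻¹' U c := by
    intro c _
    exact Set.mem_iUnion.mpr ⟨c, hUm c⟩
  obtain ⟨s, hs⟩ := isCompact_univ.elim_finite_subcover
    (fun c => Prod.mk b ⁻¹' U c) (fun c => (hUo c).preimage (Continuous.prodMk_right b)) hcov
  set W : Set (T × T) := ⋃ c ∈ s, U c with hW
  have hWopen : IsOpen W := isOpen_biUnion fun c _ => hUo c
  have hWnull : μ W = 0 :=
    (measure_biUnion_null_iff s.countable_toSet).mpr fun c _ => hU0 c
  have hsub : ({b} : Set T) ×ˢ (Set.univ : Set T) ⊆ W := by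
    rintro ⟨y, z⟩ ⟨hy, -⟩
    simp only [Set.mem_singleton_iff] at hy
    subst hy
    obtain ⟨_, ⟨c, rfl⟩, hcz⟩ := hs (Set.mem_univ z)
    simp only [Set.mem_iUnion] at hcz
    obtain ⟨hcs, hz⟩ := hcz
    exact Set.mem_biUnion hcs hz
  obtain ⟨u, v, hu, hv, hbu, hvuniv, huv⟩ :=
    generalized_tube_lemma isCompact_singleton isCompact_univ hWopen hsub
  have hb : b ∈ u := hbu rfl
  have hfst : μ (Prod.fst ⁻¹' u) = 0 := by
    refine measure_mono_null ?_ hWnull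
    intro p hp
    exact huv ⟨hp, hvuniv (Set.mem_univ p.2)⟩
  have hmeas : MeasurableSet u := hu.measurableSet
  have heq : μ (Prod.snd ⁻¹' u) = μ (Prod.fst ⁻¹' u) := by
    rw [← Measure.map_apply measurable_snd hmeas, ← hholo,
      Measure.map_apply measurable_fst hmeas]
  have hpos : 0 < μ (Prod.snd ⁻¹' u) :=
    h (Prod.snd ⁻¹' u) (hu.preimage continuous_snd) hb
  rw [heq, hfst] at hpos
  exact lt_irrefl 0 hpos

lemma step_bwd {T : Type*} [MetricSpace T] [CompactSpace T]
    [MeasurableSpace T] [BorelSpace T]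
    (μ : Measure (T × T))
    (hholo : μ.map Prod.fst = μ.map Prod.snd)
    {a b : T} (h : inSupport μ (a, b)) : ∃ z, inSupport μ (z, a) := by
  set ν : Measure (T × T) := μ.map Prod.swap with hν
  have hswap : ∀ p : T × T, inSupport μ p → inSupport ν p.swap := by
    rintro ⟨p1, p2⟩ hp V hVo hVm
    rw [hν, Measure.map_apply measurable_swap hVo.measurableSet]
    exact hp _ (hVo.preimage continuous_swap) hVm
  have hswap' : ∀ p : T × T, inSupport ν p → inSupport μ p.swap := by
    rintro ⟨p1, p2⟩ hp V hVo hVm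
    have := hp (Prod.swap ⁻¹' V) (hVo.preimage continuous_swap) hVm
    rw [hν, Measure.map_apply measurable_swap
      (hVo.preimage continuous_swap).measurableSet, Set.preimage_preimage] at this
    simpa using this
  have hholo' : ν.map Prod.fst = ν.map Prod.snd := by
    rw [hν, Measure.map_map measurable_fst measurable_swap,
      Measure.map_map measurable_snd measurable_swap]
    have e1 : (Prod.fst ∘ Prod.swap : T × T → T) = Prod.snd := rfl
    have e2 : (Prod.snd ∘ Prod.swap : T × T → T) = Prod.fst := rfl
    rw [e1, e2, hholo]
  obtain ⟨c, hcsup⟩ := step_fwd ν hholo' (hswap _ h)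
  exact ⟨c, hswap' (a, c) hcsup⟩

/-- Through every point of the support of a probability measure on `T × T` with equal
marginals there passes a bi-infinite chain contained in the support. -/
theorem stmt8 {T : Type*} [MetricSpace T] [CompactSpace T]
    [MeasurableSpace T] [BorelSpace T]
    (μ : Measure (T × T)) [IsProbabilityMeasure μ]
    (hholo : μ.map Prod.fst = μ.map Prod.snd)
    (x₀ x₁ : T) (hx : inSupport μ (x₀, x₁)) :
    ∃ x : ℤ → T, x 0 = x₀ ∧ x 1 = x₁ ∧
      ∀ k : ℤ, inSupport μ (x k, x (k + 1)) := by
  have fwd : ∀ p : T × T, inSupport μ p → ∃ c, inSupport μ (p.2, c) := by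
    rintro ⟨p1, p2⟩ hp; exact step_fwd μ hholo hp
  have bwd : ∀ p : T × T, inSupport μ p → ∃ z, inSupport μ (z, p.1) := by
    rintro ⟨p1, p2⟩ hp; exact step_bwd μ hholo hp
  choose nxt hnxt using fwd
  choose prv hprv using bwd
  set F : ℕ → {p : T × T // inSupport μ p} :=
    fun n => Nat.rec ⟨(x₀, x₁), hx⟩
      (fun _ q => ⟨((q.1).2, nxt q.1 q.2), hnxt q.1 q.2⟩) n with hF
  set B : ℕ → {p : T × T // inSupport μ p} :=
    fun n => Nat.rec ⟨(x₀, x₁), hx⟩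
      (fun _ q => ⟨(prv q.1 q.2, (q.1).1), hprv q.1 q.2⟩) n with hB
  have hFstep : ∀ n : ℕ, ((F (n + 1)).1).1 = ((F n).1).2 := fun n => rfl
  have hBstep : ∀ n : ℕ, ((B (n + 1)).1).2 = ((B n).1).1 := fun n => rfl
  refine ⟨fun k => if 0 ≤ k then ((F k.toNat).1).1 else ((B (-k).toNat).1).1,
    ?_, ?_, ?_⟩
  · rfl
  · rfl
  · intro k
    by_cases hk : 0 ≤ k
    · have h1 : (0 : ℤ) ≤ k + 1 := by omega
      have h2 : (k + 1).toNat = k.toNat + 1 := by omega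
      simp only [hk, h1, if_pos, h2, hFstep]
      have : (((F k.toNat).1).1, ((F k.toNat).1).2) = (F k.toNat).1 := rfl
      rw [this]
      exact (F k.toNat).2
    · have h1 : (-k).toNat = (-(k + 1)).toNat + 1 := by omega
      have hx' : (if 0 ≤ k + 1 then ((F (k + 1).toNat).1).1
          else ((B (-(k + 1)).toNat).1).1) = ((B (-(k + 1)).toNat).1).1 := by
        by_cases h2 : 0 ≤ k + 1
        · have hk1 : k + 1 = 0 := by omega
          have : (-(k + 1)).toNat = 0 := by omega
          simp [h2, hk1, this, hF, hB]
        · simp [h2]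
      simp only [hk, if_neg, not_false_iff, hx', h1]
      have : (((B ((-(k + 1)).toNat + 1)).1).1, ((B (-(k + 1)).toNat).1).1) =
          (B ((-(k + 1)).toNat + 1)).1 := by
        rw [← hBstep]
      exact this ▸ (B ((-(k + 1)).toNat + 1)).2
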